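/- Let θ be a ternary relation on ℕ and k, n ∈ ℕ. Every ω^{n+k}·2-large*(θ) finite set X ⊆ ℕ contains an ω^k-sparse ω^n-large*(θ) subset. -/

import Mathlib

/-- The minimum of a finite set of naturals (`0` if empty). -/
noncomputable def minN (X : Finset ℕ) : ℕ := sInf (X : Set ℕ)

/-- The maximum of a finite set of naturals (`0` if empty). -/
def maxN (X : Finset ℕ) : ℕ := X.sup id

/-- `E` lies entirely below `F`. -/
def SetBelow (E F : Finset ℕ) : Prop := ∀ x ∈ E, ∀ y ∈ F, x < y

/-- `E` and `F` are `θ`-apart: for every `x < max E` there is `y < min F`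
with `θ x y z` for all `z < max F`. -/
def ThetaApart (θ : ℕ → ℕ → ℕ → Prop) (E F : Finset ℕ) : Prop :=
  ∀ x < maxN E, ∃ y < minN F, ∀ z < maxN F, θ x y z

/-- `L·k`: finite sets containing `k` pairwise `θ`-apart members `X₀ < ⋯ < X_{k-1}` of `L`. -/
def MulK (θ : ℕ → ℕ → ℕ → Prop) (L : Set (Finset ℕ)) (k : ℕ) : Set (Finset ℕ) :=
  {F | ∃ X : Fin k → Finset ℕ, (∀ i, X i ∈ L) ∧ (∀ i, X i ⊆ F) ∧
    ∀ i j, i < j → SetBelow (X i) (X j) ∧ ThetaApart θ (X i) (X j)}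

/-- `L·σ` for a finite sequence `σ`: `L·ε = L`, `L·(k⌢τ) = (L·k)·τ`. -/
def MulSeq (θ : ℕ → ℕ → ℕ → Prop) (L : Set (Finset ℕ)) : List ℕ → Set (Finset ℕ)
  | [] => L
  | k :: τ => MulSeq θ (MulK θ L k) τ

/-- `L^θ_n`: the `ω^n`-large*(θ) finite sets. -/
noncomputable def LargeStar (θ : ℕ → ℕ → ℕ → Prop) : ℕ → Set (Finset ℕ)
  | 0 => {X | X.Nonempty}
  | n + 1 => {X | X.Nonempty ∧
      X.erase (minN X) ∈ MulSeq θ (LargeStar θ n) (List.replicate (n + 1) (minN X))}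

/-- `ω^n`-largeness(θ) (the non-starred notion). -/
noncomputable def LargeTheta (θ : ℕ → ℕ → ℕ → Prop) : ℕ → Set (Finset ℕ)
  | 0 => {X | X.Nonempty}
  | n + 1 => {X | X.Nonempty ∧ X.erase (minN X) ∈ MulK θ (LargeTheta θ n) (minN X)}

/-- `L·k` without θ-apartness (plain largeness product). -/
def MulKPlain (L : Set (Finset ℕ)) (k : ℕ) : Set (Finset ℕ) :=
  {F | ∃ X : Fin k → Finset ℕ, (∀ i, X i ∈ L) ∧ (∀ i, X i ⊆ F) ∧
    ∀ i j, i < j → SetBelow (X i) (X j)}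

/-- Ketonen–Solovay `ω^n`-largeness (no θ). -/
noncomputable def LargePlain : ℕ → Set (Finset ℕ)
  | 0 => {X | X.Nonempty}
  | n + 1 => {X | X.Nonempty ∧ X.erase (minN X) ∈ MulKPlain (LargePlain n) (minN X)}

/-- `g`-sparsity. -/
def GSparse (g : ℕ → ℕ) (X : Finset ℕ) : Prop := ∀ x ∈ X, ∀ y ∈ X, x < y → g x < y

/-- exp-sparsity. -/
def ExpSparse (X : Finset ℕ) : Prop := ∀ x ∈ X, ∀ y ∈ X, x < y → 4 ^ x < y

/-- `ω^k`-sparsity. -/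
def OmegaSparse (k : ℕ) (X : Finset ℕ) : Prop :=
  ∀ x ∈ X, ∀ y ∈ X, x < y → Finset.Ioc x y ∈ LargePlain k

/-! ### Auxiliary lemmas -/

lemma minN_mem {X : Finset ℕ} (h : X.Nonempty) : minN X ∈ X := by
  have : ((X : Set ℕ)).Nonempty := ⟨h.choose, by exact_mod_cast h.choose_spec⟩
  exact_mod_cast Nat.sInf_mem this

lemma minN_le {X : Finset ℕ} {x : ℕ} (h : x ∈ X) : minN X ≤ x :=
  Nat.sInf_le (by exact_mod_cast h)

lemma le_minN {X : Finset ℕ} {m : ℕ} (h : X.Nonempty) (hb : ∀ x ∈ X, m ≤ x) :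
    m ≤ minN X := hb _ (minN_mem h)

lemma maxN_mem {X : Finset ℕ} (h : X.Nonempty) : maxN X ∈ X := by
  obtain ⟨b, hb, he⟩ := Finset.exists_mem_eq_sup X h id
  rw [maxN, he]; exact hb

lemma le_maxN {X : Finset ℕ} {x : ℕ} (h : x ∈ X) : x ≤ maxN X :=
  Finset.le_sup (f := id) h

lemma maxN_mono {X Y : Finset ℕ} (h : X ⊆ Y) : maxN X ≤ maxN Y :=
  Finset.sup_mono h

lemma setBelow_anti {E F E' F' : Finset ℕ} (h : SetBelow E F) (hE : E' ⊆ E) (hF : F' ⊆ F) :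
    SetBelow E' F' := fun x hx y hy => h x (hE hx) y (hF hy)

lemma thetaApart_anti {θ : ℕ → ℕ → ℕ → Prop} {E F E' F' : Finset ℕ}
    (h : ThetaApart θ E F) (hE : E' ⊆ E) (hF : F' ⊆ F) (hF' : F'.Nonempty) :
    ThetaApart θ E' F' := by
  intro x hx
  obtain ⟨y, hy1, hy2⟩ := h x (lt_of_lt_of_le hx (maxN_mono hE))
  refine ⟨y, lt_of_lt_of_le hy1 (minN_le (hF (minN_mem hF'))), fun z hz => ?_⟩
  exact hy2 z (lt_of_lt_of_le hz (maxN_mono hF))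

lemma largeStar_nonempty {θ : ℕ → ℕ → ℕ → Prop} : ∀ {j : ℕ} {A : Finset ℕ},
    A ∈ LargeStar θ j → A.Nonempty := by
  intro j A h
  cases j with
  | zero => exact h
  | succ n => exact h.1

lemma mulSeq_replicate_succ (θ : ℕ → ℕ → ℕ → Prop) (d a : ℕ) :
    ∀ L, MulSeq θ L (List.replicate (d + 1) a) = MulK θ (MulSeq θ L (List.replicate d a)) a := by
  induction d with
  | zero => intro L; rfl
  | succ d ih =>
    intro L
    calc MulSeq θ L (List.replicate (d + 2) a)
        = MulSeq θ (MulK θ L a) (List.replicate (d + 1) a) := rfl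
      _ = MulK θ (MulSeq θ (MulK θ L a) (List.replicate d a)) a := ih (MulK θ L a)
      _ = MulK θ (MulSeq θ L (List.replicate (d + 1) a)) a := rfl

/-- A member of `L·(a,…,a)` contains a member of `L` (for `a ≥ 1`). -/
lemma mulSeq_subset_mem {θ : ℕ → ℕ → ℕ → Prop} {L : Set (Finset ℕ)} {a : ℕ} (ha : 1 ≤ a) :
    ∀ d F, F ∈ MulSeq θ L (List.replicate d a) → ∃ A, A ⊆ F ∧ A ∈ L := by
  intro d
  induction d with
  | zero => intro F hF; exact ⟨F, Finset.Subset.refl F, hF⟩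
  | succ d ih =>
    intro F hF
    rw [mulSeq_replicate_succ] at hF
    obtain ⟨P, hP1, hP2, _⟩ := hF
    obtain ⟨A, hA1, hA2⟩ := ih (P ⟨0, ha⟩) (hP1 ⟨0, ha⟩)
    exact ⟨A, hA1.trans (hP2 ⟨0, ha⟩), hA2⟩

/-- Every ω^{j+1}-large*(θ) set (with positive elements) contains an ω^1-large*(θ) subset. -/
lemma exists_L1_subset {θ : ℕ → ℕ → ℕ → Prop} : ∀ {j : ℕ} {A : Finset ℕ},
    A ∈ LargeStar θ (j + 1) → (∀ w ∈ A, 1 ≤ w) → ∃ B, B ⊆ A ∧ B ∈ LargeStar θ 1 := by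
  intro j
  induction j with
  | zero => intro A hA _; exact ⟨A, Finset.Subset.refl A, hA⟩
  | succ j ih =>
    intro A hA h1
    have hne : A.Nonempty := hA.1
    have hmin1 : 1 ≤ minN A := h1 _ (minN_mem hne)
    obtain ⟨C, hC1, hC2⟩ := mulSeq_subset_mem hmin1 _ _ hA.2
    have hCA : C ⊆ A := hC1.trans (Finset.erase_subset _ _)
    obtain ⟨B, hB1, hB2⟩ := ih hC2 (fun w hw => h1 w (hCA hw))
    exact ⟨B, hB1.trans hCA, hB2⟩

/-- An ω^1-large*(θ) set has at least `min + 1` elements. -/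
lemma L1_card {θ : ℕ → ℕ → ℕ → Prop} {B : Finset ℕ} (hB : B ∈ LargeStar θ 1) :
    minN B + 1 ≤ B.card := by
  have hne : B.Nonempty := hB.1
  set b := minN B with hb
  have h2 : B.erase b ∈ MulK θ (LargeStar θ 0) b := hB.2
  obtain ⟨T, hT1, hT2, hT3⟩ := h2
  have hmono : ∀ i j : Fin b, i < j → minN (T i) < minN (T j) := by
    intro i j hij
    exact (hT3 i j hij).1 _ (minN_mem (hT1 i)) _ (minN_mem (hT1 j))
  have hinj : Function.Injective (fun i : Fin b => minN (T i)) := by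
    intro i j hij
    rcases lt_trichotomy i j with h | h | h
    · exact absurd hij (Nat.ne_of_lt (hmono i j h))
    · exact h
    · exact absurd hij.symm (Nat.ne_of_lt (hmono j i h))
  have hsub : (Finset.univ.image fun i : Fin b => minN (T i)) ⊆ B.erase b := by
    intro x hx
    obtain ⟨i, _, rfl⟩ := Finset.mem_image.1 hx
    exact hT2 i (minN_mem (hT1 i))
  have hcard : b ≤ (B.erase b).card := by
    calc b = (Finset.univ : Finset (Fin b)).card := by simp
      _ = (Finset.univ.image fun i : Fin b => minN (T i)).card :=
          (Finset.card_image_of_injective _ hinj).symm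
      _ ≤ (B.erase b).card := Finset.card_le_card hsub
  have : (B.erase b).card = B.card - 1 := Finset.card_erase_of_mem (minN_mem hne)
  have : 1 ≤ B.card := Finset.card_pos.2 hne
  omega

/-- Conversion: an interval containing `x+2` elements of an ω^k-sparse set is
ω^{k+1}-large. -/
lemma ioc_large {k : ℕ} {Z : Finset ℕ} (hs : OmegaSparse k Z) {x y : ℕ} (hxy : x < y)
    (hc : x + 2 ≤ (Z ∩ Finset.Ioc x y).card) : Finset.Ioc x y ∈ LargePlain (k + 1) := by
  obtain ⟨S, hS1, hS2⟩ := Finset.exists_subset_card_eq hc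
  have e := S.orderIsoOfFin hS2
  set g : Fin (x + 2) → ℕ := fun i => (e i : ℕ) with hg
  have hgZ : ∀ i, g i ∈ Z ∩ Finset.Ioc x y := fun i => hS1 (e i).2
  have hgmono : ∀ {i j : Fin (x + 2)}, i < j → g i < g j := by
    intro i j hij
    exact_mod_cast e.strictMono hij
  have hgmono' : ∀ {i j : Fin (x + 2)}, i ≤ j → g i ≤ g j := by
    intro i j hij
    rcases lt_or_eq_of_le hij with h | h
    · exact le_of_lt (hgmono h)
    · rw [h]
  have hg0 : x + 1 ≤ g 0 := by
    have := hgZ 0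
    rw [Finset.mem_inter, Finset.mem_Ioc] at this
    omega
  have hgy : ∀ i, g i ≤ y := by
    intro i
    have := hgZ i
    rw [Finset.mem_inter, Finset.mem_Ioc] at this
    exact this.2.2
  have hminIoc : minN (Finset.Ioc x y) = x + 1 := by
    apply le_antisymm
    · exact minN_le (Finset.mem_Ioc.2 ⟨Nat.lt_succ_self x, hxy⟩)
    · apply le_minN ⟨x + 1, Finset.mem_Ioc.2 ⟨Nat.lt_succ_self x, hxy⟩⟩
      intro w hw
      exact (Finset.mem_Ioc.1 hw).1
  refine ⟨⟨y, Finset.mem_Ioc.2 ⟨hxy, le_refl y⟩⟩, ?_⟩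
  rw [hminIoc]
  refine ⟨fun i => Finset.Ioc (g i.castSucc) (g i.succ), fun i => ?_, fun i => ?_, ?_⟩
  · -- each gap interval is ω^k-large
    have h1 : g i.castSucc ∈ Z := (Finset.mem_inter.1 (hgZ i.castSucc)).1
    have h2 : g i.succ ∈ Z := (Finset.mem_inter.1 (hgZ i.succ)).1
    exact hs _ h1 _ h2 (hgmono (Fin.castSucc_lt_succ : i.castSucc < i.succ))
  · -- contained in the erased interval
    intro w hw
    rw [Finset.mem_Ioc] at hw
    have h0i : g 0 ≤ g i.castSucc := hgmono' (Fin.zero_le _)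
    have hiy : g i.succ ≤ y := hgy _
    refine Finset.mem_erase.2 ⟨by omega, Finset.mem_Ioc.2 ⟨by omega, by omega⟩⟩
  · -- pairwise below
    intro i j hij
    intro u hu v hv
    rw [Finset.mem_Ioc] at hu hv
    have : g i.succ ≤ g j.castSucc := by
      apply hgmono'
      rw [Fin.le_def]
      simp only [Fin.val_succ, Fin.coe_castSucc]
      exact hij
    omega

/-- The internal-sparseness counting property: between any two elements of `V` there
are at least `x+2` elements of the ambient set `A`. -/
def SparseCount (A V : Finset ℕ) : Prop :=
  ∀ x ∈ V, ∀ y ∈ V, x < y → x + 2 ≤ (A ∩ Finset.Ioc x y).card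

lemma sparseCount_mono {A A' V : Finset ℕ} (h : SparseCount A V) (hA : A ⊆ A') :
    SparseCount A' V := by
  intro x hx y hy hxy
  exact le_trans (h x hx y hy hxy)
    (Finset.card_le_card (Finset.inter_subset_inter_right hA))

/-- The tree extraction lemma: from a depth-`d+1` tree of arity `c` with ω^{j+1}-large*(θ)
leaves, extract a depth-`d` tree of arity `c` with ω^j-large*(θ) leaves which is internally
sparse and has a "prefix gap". -/
lemma tree_extract (θ : ℕ → ℕ → ℕ → Prop) (j : ℕ)
    (hM : ∀ A, A ∈ LargeStar θ (j + 1) → (∀ w ∈ A, 3 ≤ w) →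
      ∃ V, V ⊆ A ∧ V.Nonempty ∧ V ∈ LargeStar θ j ∧ SparseCount A V) :
    ∀ d c G, 2 ≤ c → (∀ w ∈ G, 3 ≤ w) →
      G ∈ MulSeq θ (LargeStar θ (j + 1)) (List.replicate (d + 1) c) →
      ∃ V, V ⊆ G ∧ V.Nonempty ∧ V ∈ MulSeq θ (LargeStar θ j) (List.replicate d c) ∧
        (∀ x₀, (∀ w ∈ G, x₀ < w) → x₀ + 2 ≤ (G ∩ Finset.Ioc x₀ (minN V)).card) ∧
        SparseCount G V := by
  intro d
  induction d with
  | zero =>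
    intro c G hc h3 hG
    rw [mulSeq_replicate_succ] at hG
    obtain ⟨P, hP1, hP2, hP3⟩ := hG
    set i0 : Fin c := ⟨0, by omega⟩ with hi0
    set i1 : Fin c := ⟨1, by omega⟩ with hi1
    have hi0v : (i0 : ℕ) = 0 := rfl
    have hi1v : (i1 : ℕ) = 1 := rfl
    have h01 : i0 < i1 := by rw [Fin.lt_def, hi0v, hi1v]; omega
    -- the leaf used for the prefix gap
    obtain ⟨B, hB1, hB2⟩ := exists_L1_subset (hP1 i0)
      (fun w hw => by have := h3 w (hP2 i0 hw); omega)
    have hBne : B.Nonempty := largeStar_nonempty hB2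
    -- extract from the second leaf
    obtain ⟨V, hV1, hV2, hV3, hV4⟩ := hM (P i1) (hP1 i1)
      (fun w hw => h3 w (hP2 i1 hw))
    refine ⟨V, hV1.trans (hP2 i1), hV2, hV3, ?_, sparseCount_mono hV4 (hP2 i1)⟩
    intro x₀ hx₀
    have hBsub : B ⊆ G ∩ Finset.Ioc x₀ (minN V) := by
      intro w hw
      have hwG : w ∈ G := hP2 i0 (hB1 hw)
      have hwlt : w < minN V := (hP3 i0 i1 h01).1 w (hB1 hw) _ (hV1 (minN_mem hV2))
      exact Finset.mem_inter.2 ⟨hwG, Finset.mem_Ioc.2 ⟨hx₀ w hwG, le_of_lt hwlt⟩⟩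
    have hBmin : x₀ + 1 ≤ minN B := hx₀ _ (hP2 i0 (hB1 (minN_mem hBne)))
    calc x₀ + 2 ≤ minN B + 1 := by omega
      _ ≤ B.card := L1_card hB2
      _ ≤ (G ∩ Finset.Ioc x₀ (minN V)).card := Finset.card_le_card hBsub
  | succ d ih =>
    intro c G hc h3 hG
    rw [mulSeq_replicate_succ] at hG
    obtain ⟨P, hP1, hP2, hP3⟩ := hG
    have hcall : ∀ i : Fin c, ∃ V, V ⊆ P i ∧ V.Nonempty ∧
        V ∈ MulSeq θ (LargeStar θ j) (List.replicate d c) ∧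
        (∀ x₀, (∀ w ∈ P i, x₀ < w) → x₀ + 2 ≤ ((P i) ∩ Finset.Ioc x₀ (minN V)).card) ∧
        SparseCount (P i) V :=
      fun i => ih c (P i) hc (fun w hw => h3 w (hP2 i hw)) (hP1 i)
    choose Vf hVsub hVne hVmem hVpre hVint using hcall
    set i0 : Fin c := ⟨0, by omega⟩ with hi0
    have hi0v : (i0 : ℕ) = 0 := rfl
    set V : Finset ℕ := Finset.univ.biUnion Vf with hV
    have hVfV : ∀ i, Vf i ⊆ V := fun i w hw =>
      Finset.mem_biUnion.2 ⟨i, Finset.mem_univ i, hw⟩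
    have hVG : V ⊆ G := by
      intro w hw
      obtain ⟨i, _, hwi⟩ := Finset.mem_biUnion.1 hw
      exact hP2 i (hVsub i hwi)
    have hVn : V.Nonempty := (hVne i0).mono (hVfV i0)
    -- min of V is min of Vf i0
    have hminV : minN V = minN (Vf i0) := by
      apply le_antisymm
      · exact minN_le (hVfV i0 (minN_mem (hVne i0)))
      · apply le_minN hVn
        intro b hb
        obtain ⟨i, _, hbi⟩ := Finset.mem_biUnion.1 hb
        by_cases h : i = i0
        · exact minN_le (h ▸ hbi)
        · have : i0 < i := by
            rw [Fin.lt_def, hi0v]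
            have : i.val ≠ 0 := fun hz => h (Fin.ext (hz.trans hi0v.symm))
            omega
          exact le_of_lt ((hP3 i0 i this).1 _ (hVsub i0 (minN_mem (hVne i0))) _ (hVsub i hbi))
    refine ⟨V, hVG, hVn, ?_, ?_, ?_⟩
    · -- membership
      rw [mulSeq_replicate_succ]
      refine ⟨Vf, hVmem, hVfV, fun i j hij => ?_⟩
      exact ⟨setBelow_anti (hP3 i j hij).1 (hVsub i) (hVsub j),
        thetaApart_anti (hP3 i j hij).2 (hVsub i) (hVsub j) (hVne j)⟩
    · -- prefix gap
      intro x₀ hx₀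
      have := hVpre i0 x₀ (fun w hw => hx₀ w (hP2 i0 hw))
      refine le_trans this (Finset.card_le_card ?_)
      intro w hw
      rw [Finset.mem_inter] at hw ⊢
      rw [hminV]
      exact ⟨hP2 i0 hw.1, hw.2⟩
    · -- internal sparsity
      intro x hx y hy hxy
      obtain ⟨i, _, hxi⟩ := Finset.mem_biUnion.1 hx
      obtain ⟨i', _, hyi⟩ := Finset.mem_biUnion.1 hy
      by_cases hii : i = i'
      · subst hii
        refine le_trans (hVint i x hxi y hyi hxy) (Finset.card_le_card ?_)
        intro w hw
        rw [Finset.mem_inter] at hw ⊢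
        exact ⟨hP2 i hw.1, hw.2⟩
      · have hlt : i < i' := by
          rcases lt_trichotomy i i' with h | h | h
          · exact h
          · exact absurd h hii
          · exact absurd ((hP3 i' i h).1 y (hVsub i' hyi) x (hVsub i hxi)) (by omega)
        have hi1lt : i.val + 1 < c := by
          have := hlt; rw [Fin.lt_def] at this
          have := i'.isLt; omega
        set i1 : Fin c := ⟨i.val + 1, hi1lt⟩ with hi1
        have hi1v : (i1 : ℕ) = i.val + 1 := rfl
        have hii1 : i < i1 := by rw [Fin.lt_def, hi1v]; omega
        have hx_below : ∀ w ∈ P i1, x < w :=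
          fun w hw => (hP3 i i1 hii1).1 x (hVsub i hxi) w hw
        have hpre := hVpre i1 x hx_below
        refine le_trans hpre (Finset.card_le_card ?_)
        intro w hw
        rw [Finset.mem_inter, Finset.mem_Ioc] at hw ⊢
        have hm1y : minN (Vf i1) ≤ y := by
          by_cases h11 : i1 = i'
          · exact minN_le (h11 ▸ hyi)
          · have : i1 < i' := by
              rw [Fin.lt_def, hi1v]
              have h3' : i1.val ≠ i'.val := fun hz => h11 (Fin.ext hz)
              rw [hi1v] at h3'
              have := hlt; rw [Fin.lt_def] at this
              omega
            exact le_of_lt ((hP3 i1 i' this).1 _ (hVsub i1 (minN_mem (hVne i1))) _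
              (hVsub i' hyi))
        exact ⟨hP2 i1 hw.1, hw.2.1, le_trans hw.2.2 hm1y⟩

/-- The key sparse-extraction lemma: every ω^{j+1}-large*(θ) set `A` (all of whose
elements are at least 3) contains an ω^j-large*(θ) subset `V` such that between any
two elements of `V` there are at least `x+2` elements of `A`. -/
lemma sparse_extract (θ : ℕ → ℕ → ℕ → Prop) : ∀ j A, A ∈ LargeStar θ (j + 1) →
    (∀ w ∈ A, 3 ≤ w) →
    ∃ V, V ⊆ A ∧ V.Nonempty ∧ V ∈ LargeStar θ j ∧ SparseCount A V := by
  intro j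
  induction j with
  | zero =>
    intro A hA h3
    have hne : A.Nonempty := hA.1
    refine ⟨{maxN A}, Finset.singleton_subset_iff.2 (maxN_mem hne), ⟨_, Finset.mem_singleton_self _⟩,
      ⟨_, Finset.mem_singleton_self _⟩, ?_⟩
    intro x hx y hy hxy
    rw [Finset.mem_singleton] at hx hy
    omega
  | succ j ih =>
    intro A hA h3
    have hne : A.Nonempty := hA.1
    set c := minN A with hcdef
    have hc3 : 3 ≤ c := h3 _ (minN_mem hne)
    have herase3 : ∀ w ∈ A.erase c, 3 ≤ w := fun w hw => h3 w (Finset.erase_subset _ _ hw)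
    obtain ⟨V', hV'1, hV'2, hV'3, hV'4, hV'5⟩ :=
      tree_extract θ j ih (j + 1) c (A.erase c) (by omega) herase3 hA.2
    have hcnot : c ∉ V' := fun h => (Finset.mem_erase.1 (hV'1 h)).1 rfl
    set V : Finset ℕ := insert c V' with hVdef
    have hcV' : ∀ w ∈ V', c < w := by
      intro w hw
      have := Finset.mem_erase.1 (hV'1 hw)
      have := minN_le this.2
      omega
    have hminV : minN V = c := by
      apply le_antisymm
      · exact minN_le (Finset.mem_insert_self c V')
      · apply le_minN ⟨c, Finset.mem_insert_self c V'⟩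
        intro b hb
        rcases Finset.mem_insert.1 hb with h | h
        · omega
        · exact le_of_lt (hcV' b h)
    refine ⟨V, ?_, ⟨c, Finset.mem_insert_self c V'⟩, ?_, ?_⟩
    · -- subset
      intro w hw
      rcases Finset.mem_insert.1 hw with h | h
      · rw [h]; exact minN_mem hne
      · exact Finset.erase_subset _ _ (hV'1 h)
    · -- V ∈ LargeStar θ (j+1)
      refine ⟨⟨c, Finset.mem_insert_self c V'⟩, ?_⟩
      rw [hminV, Finset.erase_insert hcnot]
      exact hV'3
    · -- sparse counting
      intro x hx y hy hxy
      rcases Finset.mem_insert.1 hx with hxc | hxV'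
      · rcases Finset.mem_insert.1 hy with hyc | hyV'
        · omega
        · -- x = c
          subst hxc
          have hAec : ∀ w ∈ A.erase c, c < w := by
            intro w hw
            have h := Finset.mem_erase.1 hw
            have := minN_le h.2
            omega
          have := hV'4 c hAec
          refine le_trans this (Finset.card_le_card ?_)
          intro w hw
          rw [Finset.mem_inter, Finset.mem_Ioc] at hw ⊢
          have : minN V' ≤ y := minN_le hyV'
          exact ⟨Finset.erase_subset _ _ hw.1, hw.2.1, by omega⟩
      · rcases Finset.mem_insert.1 hy with hyc | hyV'
        · subst hyc; have := hcV' x hxV'; omega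
        · refine le_trans (hV'5 x hxV' y hyV' hxy) (Finset.card_le_card ?_)
          intro w hw
          rw [Finset.mem_inter] at hw ⊢
          exact ⟨Finset.erase_subset _ _ hw.1, hw.2⟩

/-- extraction of an ω^k-sparse large subset. -/
theorem stmt_7 (θ : ℕ → ℕ → ℕ → Prop) (k n : ℕ) (X : Finset ℕ) (h3 : 3 ≤ minN X)
    (hX : X ∈ MulK θ (LargeStar θ (n + k)) 2) :
    ∃ Y ⊆ X, Y ∈ LargeStar θ n ∧ OmegaSparse k Y := by
  induction k generalizing n X with
  | zero =>
    obtain ⟨W, hW1, hW2, _⟩ := hX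
    refine ⟨W 0, hW2 0, hW1 0, ?_⟩
    intro x _ y _ hxy
    exact ⟨y, Finset.mem_Ioc.2 ⟨hxy, le_refl y⟩⟩
  | succ k ih =>
    have heq : n + (k + 1) = (n + 1) + k := by omega
    rw [heq] at hX
    obtain ⟨Z, hZX, hZ, hZs⟩ := ih (n + 1) X h3 hX
    have hZ3 : ∀ w ∈ Z, 3 ≤ w := by
      intro w hw
      have := minN_le (hZX hw)
      omega
    obtain ⟨V, hVZ, _, hVmem, hVsp⟩ := sparse_extract θ n Z hZ hZ3
    refine ⟨V, hVZ.trans hZX, hVmem, ?_⟩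
    intro x hx y hy hxy
    exact ioc_large hZs hxy (hVsp x hx y hy hxy)
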